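/- arXiv:2012.04004 — 3 statements merged into one kernel-verified Lean document; each statement's English description precedes it below -/
import Mathlib

section
/- Let V be a variety of τ-algebras. The assignments K ↦ B^K and B ↦ K^B between subclasses of V_fg and subfamilies of Con(F^V) establish a one-to-one correspondence between the subclasses of V_fg closed under finitely generated subalgebras and the subfamilies of Con(F^V) closed under inverse substitution. -/
/-! Universal-algebra preamble: functional signatures, algebras (with nonempty
carriers, as usual in universal algebra), terms, homomorphisms, congruences,
quotients, free algebras, and the operators/uniformities of the paper.

Families indexed over the components of a clone are indexed by `k : ℕ`, where
index `k` stands for the component of arity `k + 1` (so all arities `≥ 1`). -/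

/-- A functional signature: a type of function symbols together with arities. -/
structure Signature : Type 1 where
  F : Type
  arity : F → ℕ

/-- A τ-algebra: a nonempty carrier together with an interpretation of each symbol. -/
structure Alg (σ : Signature) : Type 1 where
  carrier : Type
  nonempty : Nonempty carrier
  op : ∀ f : σ.F, (Fin (σ.arity f) → carrier) → carrier

/-- Abstract τ-terms over the variables x_1, …, x_n. -/
inductive Trm (σ : Signature) (n : ℕ) : Type
  | var : Fin n → Trm σ n
  | app : ∀ f : σ.F, (Fin (σ.arity f) → Trm σ n) → Trm σ n

variable {σ : Signature}

/-- Evaluation of a term in an algebra under a valuation of the variables. -/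
def Trm.eval {n : ℕ} (A : Alg σ) (v : Fin n → A.carrier) : Trm σ n → A.carrier
  | .var i => v i
  | .app f ts => A.op f fun i => Trm.eval A v (ts i)

/-- The term operation `t^A` induced on `A` by the term `t`. -/
def termOp {n : ℕ} (A : Alg σ) (t : Trm σ n) : (Fin n → A.carrier) → A.carrier :=
  fun v => t.eval A v

/-- Homomorphisms of τ-algebras. -/
def IsHom (A B : Alg σ) (h : A.carrier → B.carrier) : Prop :=
  ∀ (f : σ.F) (x : Fin (σ.arity f) → A.carrier), h (A.op f x) = B.op f fun i => h (x i)

/-- Isomorphism of τ-algebras. -/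
def Isomorphic (A B : Alg σ) : Prop :=
  ∃ h : A.carrier → B.carrier, IsHom A B h ∧ Function.Bijective h

/-- Membership in the subuniverse generated by `S`. -/
inductive InClosure (A : Alg σ) (S : Set A.carrier) : A.carrier → Prop
  | base : ∀ a ∈ S, InClosure A S a
  | app : ∀ (f : σ.F) (x : Fin (σ.arity f) → A.carrier),
      (∀ i, InClosure A S (x i)) → InClosure A S (A.op f x)

/-- An algebra is finitely generated if a finite subset generates it. -/
def FinGen (A : Alg σ) : Prop :=
  ∃ S : Set A.carrier, S.Finite ∧ ∀ a, InClosure A S a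

/-- Product of a family of algebras. -/
def PiAlg {ι : Type} (A : ι → Alg σ) : Alg σ where
  carrier := ∀ i, (A i).carrier
  nonempty := ⟨fun i => Classical.choice (A i).nonempty⟩
  op f x := fun i => (A i).op f fun j => x j i

/-- A congruence: an equivalence relation compatible with all operations. -/
def IsCongruence (A : Alg σ) (r : A.carrier → A.carrier → Prop) : Prop :=
  Equivalence r ∧ ∀ (f : σ.F) (x y : Fin (σ.arity f) → A.carrier),
    (∀ i, r (x i) (y i)) → r (A.op f x) (A.op f y)

/-- Bundled congruences on an algebra. -/
structure Cong (A : Alg σ) : Type where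
  r : A.carrier → A.carrier → Prop
  iscon : IsCongruence A r

/-- The quotient algebra of `A` by (a relation which is intended to be) a congruence. -/
noncomputable def quotAlg (A : Alg σ) (r : A.carrier → A.carrier → Prop) : Alg σ where
  carrier := Quot r
  nonempty := ⟨Quot.mk r (Classical.choice A.nonempty)⟩
  op f x := Quot.mk r (A.op f fun i => (x i).out)

/-- The subalgebra of `A` on a nonempty subset closed under the operations. -/
def subAlg (A : Alg σ) (S : Set A.carrier) (hne : S.Nonempty)
    (hcl : ∀ (f : σ.F) (x : Fin (σ.arity f) → A.carrier), (∀ i, x i ∈ S) → A.op f x ∈ S) :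
    Alg σ where
  carrier := {a : A.carrier // a ∈ S}
  nonempty := ⟨⟨hne.choose, hne.choose_spec⟩⟩
  op f x := ⟨A.op f fun i => (x i).1, hcl f _ fun i => (x i).2⟩

/-- The subalgebra of `A` generated by a nonempty subset `S`. -/
def genSubAlg (A : Alg σ) (S : Set A.carrier) (hne : S.Nonempty) : Alg σ where
  carrier := {a : A.carrier // InClosure A S a}
  nonempty := ⟨⟨hne.choose, InClosure.base _ hne.choose_spec⟩⟩
  op f x := ⟨A.op f fun i => (x i).1, InClosure.app f _ fun i => (x i).2⟩

/-- H: homomorphic images of members of `K`. -/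
def Hcl (K : Set (Alg σ)) : Set (Alg σ) :=
  {B | ∃ A ∈ K, ∃ h : A.carrier → B.carrier, IsHom A B h ∧ Function.Surjective h}

/-- I: isomorphic copies of members of `K`. -/
def Icl (K : Set (Alg σ)) : Set (Alg σ) := {B | ∃ A ∈ K, Isomorphic A B}

/-- S: isomorphic copies of subalgebras (i.e. algebras embedding into members) of `K`. -/
def Scl (K : Set (Alg σ)) : Set (Alg σ) :=
  {B | ∃ A ∈ K, ∃ e : B.carrier → A.carrier, IsHom B A e ∧ Function.Injective e}

/-- P_f: isomorphic copies of finite (nonempty) products of members of `K`. -/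
def Pfcl (K : Set (Alg σ)) : Set (Alg σ) :=
  {B | ∃ (n : ℕ) (A : Fin (n + 1) → Alg σ), (∀ i, A i ∈ K) ∧ Isomorphic (PiAlg A) B}

/-- S_f: isomorphic copies of finitely generated subalgebras of members of `K`. -/
def Sf (K : Set (Alg σ)) : Set (Alg σ) :=
  {B | FinGen B ∧ ∃ A ∈ K, ∃ e : B.carrier → A.carrier, IsHom B A e ∧ Function.Injective e}

/-- S P_f: isomorphic copies of finitely generated subalgebras of finite products
of members of `K`. -/
def SPf (K : Set (Alg σ)) : Set (Alg σ) :=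
  {B | FinGen B ∧ ∃ (n : ℕ) (A : Fin (n + 1) → Alg σ), (∀ i, A i ∈ K) ∧
    ∃ e : B.carrier → (PiAlg A).carrier, IsHom B (PiAlg A) e ∧ Function.Injective e}

/-- A pseudovariety of finitely generated algebras: a class of finitely generated
algebras closed under homomorphic images and under isomorphic copies of finitely
generated subalgebras of finite products of its members. -/
def IsPseudovarietyFG (C : Set (Alg σ)) : Prop :=
  (∀ A ∈ C, FinGen A) ∧ Hcl C ⊆ C ∧ SPf C ⊆ C

/-- A pseudovariety of finite algebras: a class of finite algebras closed under
finite products, subalgebras and homomorphic images. -/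
def IsPseudovarietyFin (C : Set (Alg σ)) : Prop :=
  (∀ A ∈ C, Finite A.carrier) ∧ Hcl C ⊆ C ∧ Scl C ⊆ C ∧ Pfcl C ⊆ C

/-- A variety: a class closed under arbitrary products, subalgebras and
homomorphic images. -/
def IsVariety (V : Set (Alg σ)) : Prop :=
  (∀ (ι : Type) (A : ι → Alg σ), (∀ i, A i ∈ V) → PiAlg A ∈ V) ∧
  Scl V ⊆ V ∧ Hcl V ⊆ V

/-- The identities of the class `C`: `s` and `t` are identified iff they induce the
same operation on every member of `C`. -/
def FreeCon (C : Set (Alg σ)) (n : ℕ) : Trm σ n → Trm σ n → Prop :=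
  fun s t => ∀ A ∈ C, ∀ v : Fin n → A.carrier, s.eval A v = t.eval A v

/-- `freeAlg C k` is `F_{k+1}^C`, the free algebra for `C` on `k + 1` generators:
the term algebra on the variables `x_1, …, x_{k+1}` modulo the identities of `C`.
(The index `k` stands for arity `k + 1`, so all components have arity `≥ 1`.) -/
noncomputable def freeAlg (C : Set (Alg σ)) (k : ℕ) : Alg σ where
  carrier := Quot (FreeCon C (k + 1))
  nonempty := ⟨Quot.mk _ (Trm.var 0)⟩
  op f x := Quot.mk _ (Trm.app f fun i => (x i).out)

/-- The finitely generated members of `V`. -/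
def Vfg (V : Set (Alg σ)) : Set (Alg σ) := {A | A ∈ V ∧ FinGen A}

/-- `B^K`: the congruences of the free algebras whose quotient is isomorphic to a
member of `K`. -/
def BK (V K : Set (Alg σ)) (k : ℕ) : Set (Cong (freeAlg V k)) :=
  {θ | quotAlg (freeAlg V k) θ.r ∈ Icl K}

/-- `K^B`: isomorphic copies of the quotients of free algebras by congruences in `B`. -/
def KB (V : Set (Alg σ)) (B : ∀ k : ℕ, Set (Cong (freeAlg V k))) : Set (Alg σ) :=
  Icl {A | ∃ (k : ℕ), ∃ θ ∈ B k, A = quotAlg (freeAlg V k) θ.r}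

/-- `θ/t̄`: the inverse substitution of the congruence `θ` along the tuple `t̄`;
`s (θ/t̄) s'` iff `s(t₁,…,t_m) θ s'(t₁,…,t_m)`. -/
noncomputable def conSubstRel {V : Set (Alg σ)} {k : ℕ} (θ : Cong (freeAlg V k)) {m : ℕ}
    (t : Fin (m + 1) → (freeAlg V k).carrier) :
    (freeAlg V m).carrier → (freeAlg V m).carrier → Prop :=
  fun s s' => θ.r (Trm.eval (freeAlg V k) t s.out) (Trm.eval (freeAlg V k) t s'.out)

/-- A family of congruences is closed under inverse substitution. -/
def InvSubstClosed (V : Set (Alg σ)) (B : ∀ k : ℕ, Set (Cong (freeAlg V k))) : Prop :=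
  ∀ (k m : ℕ), ∀ θ ∈ B k, ∀ t : Fin (m + 1) → (freeAlg V k).carrier,
    ∃ θ' ∈ B m, θ'.r = conSubstRel θ t

/-- A family of congruences is closed under finite intersections (componentwise). -/
def InterClosed (V : Set (Alg σ)) (B : ∀ k : ℕ, Set (Cong (freeAlg V k))) : Prop :=
  ∀ (k n : ℕ) (θs : Fin (n + 1) → Cong (freeAlg V k)), (∀ i, θs i ∈ B k) →
    ∃ θ' ∈ B k, θ'.r = fun a b => ∀ i, (θs i).r a b

/-- A family of congruences is upward closed (componentwise). -/
def UpClosed (V : Set (Alg σ)) (B : ∀ k : ℕ, Set (Cong (freeAlg V k))) : Prop :=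
  ∀ (k : ℕ), ∀ θ ∈ B k, ∀ ψ : Cong (freeAlg V k), (∀ a b, θ.r a b → ψ.r a b) → ψ ∈ B k

/-- A filter on `X × X` is a uniformity: every entourage contains the diagonal, the
converse of an entourage is an entourage, and the generalised triangle inequality. -/
def IsUniformity {X : Type} (u : Filter (X × X)) : Prop :=
  (∀ U ∈ u, ∀ x : X, (x, x) ∈ U) ∧
  (∀ U ∈ u, {p : X × X | (p.2, p.1) ∈ U} ∈ u) ∧
  (∀ U ∈ u, ∃ W ∈ u, ∀ x y z : X, (x, y) ∈ W → (y, z) ∈ W → (x, z) ∈ U)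

/-- `U^C` (the component of index `k`, i.e. of arity `k + 1`): the filter on
`F_{k+1}^V × F_{k+1}^V` generated by the congruences `θ` of `F_{k+1}^V` such that
`F_{k+1}^V/θ` is isomorphic to a member of `C`. -/
noncomputable def unifC (V C : Set (Alg σ)) (k : ℕ) :
    Filter ((freeAlg V k).carrier × (freeAlg V k).carrier) :=
  Filter.generate
    {U | ∃ θ : Cong (freeAlg V k), quotAlg (freeAlg V k) θ.r ∈ Icl C ∧ U = {p | θ.r p.1 p.2}}

/-- The `(k+1)`-ary part of `Clo(A)`: the `(k+1)`-ary term operations of `A`. -/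
def CloK (A : Alg σ) (k : ℕ) : Type :=
  {g : (Fin (k + 1) → A.carrier) → A.carrier // ∃ t : Trm σ (k + 1), g = termOp A t}

/-- The uniformity of pointwise convergence on the `(k+1)`-ary part of `Clo(A)`:
generated by the sets `U_ā = {(f, g) | f(ā) = g(ā)}`. -/
noncomputable def ptwUnif (A : Alg σ) (k : ℕ) : Filter (CloK A k × CloK A k) :=
  Filter.generate {U | ∃ a : Fin (k + 1) → A.carrier, U = {p | p.1.1 a = p.2.1 a}}

/-- The natural map from the free algebra for `C` onto `Clo(A)`, sending the class
of a term `t` to the term operation `t^A`. -/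
noncomputable def natMap (C : Set (Alg σ)) (A : Alg σ) (k : ℕ) :
    (freeAlg C k).carrier → CloK A k :=
  fun q => ⟨termOp A q.out, q.out, rfl⟩

/-- The natural map between the free algebras of two classes (class of `t` to
class of `t`). -/
noncomputable def freeNatMap (C D : Set (Alg σ)) (k : ℕ) :
    (freeAlg C k).carrier → (freeAlg D k).carrier :=
  fun q => Quot.mk _ q.out

/-- The natural map `Clo(A) → Clo(B)`, sending `t^A` to `t^B`. -/
noncomputable def cloNatMap (A B : Alg σ) (k : ℕ) : CloK A k → CloK B k :=
  fun g => ⟨termOp B (Classical.choose g.2), Classical.choose g.2, rfl⟩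

/-- The variety generated by `A`. -/
def varietyGen (A : Alg σ) : Set (Alg σ) :=
  {B | ∀ V : Set (Alg σ), IsVariety V → A ∈ V → B ∈ V}

/-- The pseudovariety generated by `A`: the smallest class containing `A` closed
under finite products, subalgebras and homomorphic images. -/
def psvGen (A : Alg σ) : Set (Alg σ) :=
  {B | ∀ C : Set (Alg σ), A ∈ C → Hcl C ⊆ C → Scl C ⊆ C → Pfcl C ⊆ C → B ∈ C}

/-- The pseudovariety of finitely generated algebras generated by `A`: the finitely
generated members of the pseudovariety generated by `A`. -/
def psvFgGen (A : Alg σ) : Set (Alg σ) := {B | FinGen B ∧ B ∈ psvGen A}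

namespace CorrAux

variable {σ : Signature}

lemma freeCon_equiv (C : Set (Alg σ)) (n : ℕ) : Equivalence (FreeCon C n) :=
  ⟨fun _ _ _ _ => rfl, fun h A hA v => (h A hA v).symm,
   fun h1 h2 A hA v => (h1 A hA v).trans (h2 A hA v)⟩

lemma rel_of_mk_eq {X : Type} {r : X → X → Prop} (hr : Equivalence r) {a b : X}
    (h : Quot.mk r a = Quot.mk r b) : r a b :=
  hr.eqvGen_iff.mp (Quot.eq.mp h)

lemma out_rel {X : Type} {r : X → X → Prop} (hr : Equivalence r) (a : X) :
    r (Quot.mk r a).out a :=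
  rel_of_mk_eq hr (Quot.out_eq _)

lemma mk_eq_iff {X : Type} {r : X → X → Prop} (hr : Equivalence r) {a b : X} :
    Quot.mk r a = Quot.mk r b ↔ r a b :=
  ⟨rel_of_mk_eq hr, Quot.sound⟩

lemma free_op {C : Set (Alg σ)} {k : ℕ} (f : σ.F)
    (x : Fin (σ.arity f) → (freeAlg C k).carrier) (ts : Fin (σ.arity f) → Trm σ (k + 1))
    (hx : ∀ i, x i = Quot.mk _ (ts i)) :
    (freeAlg C k).op f x = Quot.mk _ (Trm.app f ts) := by
  show Quot.mk _ (Trm.app f fun i => (x i).out) = _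
  apply Quot.sound
  intro A hA v
  show A.op f _ = A.op f _
  congr 1
  funext i
  have hfc : FreeCon C (k + 1) ((x i).out) (ts i) := by
    rw [hx i]; exact out_rel (freeCon_equiv C (k + 1)) (ts i)
  exact hfc A hA v

lemma out_eval {C : Set (Alg σ)} {k : ℕ} {A : Alg σ} (hA : A ∈ C)
    (s : Trm σ (k + 1)) (v : Fin (k + 1) → A.carrier) :
    Trm.eval A v (Quot.mk (FreeCon C (k + 1)) s).out = Trm.eval A v s :=
  out_rel (freeCon_equiv C (k + 1)) s A hA v

lemma quot_op {A : Alg σ} (θ : Cong A) (f : σ.F)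
    (x : Fin (σ.arity f) → (quotAlg A θ.r).carrier) (y : Fin (σ.arity f) → A.carrier)
    (hx : ∀ i, x i = Quot.mk θ.r (y i)) :
    (quotAlg A θ.r).op f x = Quot.mk θ.r (A.op f y) := by
  show Quot.mk θ.r (A.op f fun i => (x i).out) = _
  apply Quot.sound
  apply θ.iscon.2
  intro i
  rw [hx i]
  exact out_rel θ.iscon.1 (y i)

lemma mk_hom {A : Alg σ} (θ : Cong A) : IsHom A (quotAlg A θ.r) (Quot.mk θ.r) :=
  fun f x => (quot_op θ f _ x fun _ => rfl).symm

lemma ker_cong {A B : Alg σ} {h : A.carrier → B.carrier} (hh : IsHom A B h) :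
    IsCongruence A (fun a b => h a = h b) :=
  ⟨⟨fun _ => rfl, Eq.symm, Eq.trans⟩, fun f x y hxy => by
    show h (A.op f x) = h (A.op f y)
    rw [hh f x, hh f y]; exact congrArg _ (funext hxy)⟩

lemma iso_refl (A : Alg σ) : Isomorphic A A := ⟨id, fun _ _ => rfl, Function.bijective_id⟩

lemma hom_comp {A B C : Alg σ} {h : A.carrier → B.carrier} {g : B.carrier → C.carrier}
    (hh : IsHom A B h) (hg : IsHom B C g) : IsHom A C (fun a => g (h a)) := fun f x => by
  show g (h (A.op f x)) = C.op f fun i => g (h (x i))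
  rw [hh f x, hg f]

lemma iso_symm {A B : Alg σ} (h : Isomorphic A B) : Isomorphic B A := by
  obtain ⟨f, hf, hb⟩ := h
  choose g hg using fun b => hb.2 b
  have hgf : ∀ a, g (f a) = a := fun a => hb.1 (by rw [hg])
  refine ⟨g, ?_, fun a b hab => by rw [← hg a, ← hg b, hab], fun a => ⟨f a, hgf a⟩⟩
  intro ff y
  apply hb.1
  rw [hg, hf]
  congr 1
  funext i
  rw [hg]

lemma iso_trans {A B C : Alg σ} (h1 : Isomorphic A B) (h2 : Isomorphic B C) :
    Isomorphic A C := by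
  obtain ⟨f, hf, hfb⟩ := h1; obtain ⟨g, hg, hgb⟩ := h2
  exact ⟨fun a => g (f a), hom_comp hf hg, hgb.comp hfb⟩

lemma inClosure_mono {A : Alg σ} {S T : Set A.carrier} (hST : S ⊆ T) {a : A.carrier}
    (h : InClosure A S a) : InClosure A T a := by
  induction h with
  | base a ha => exact InClosure.base a (hST ha)
  | app f x hx ih => exact InClosure.app f x ih

lemma finGen_of_surj {A B : Alg σ} (hA : FinGen A) {h : A.carrier → B.carrier}
    (hh : IsHom A B h) (hs : Function.Surjective h) : FinGen B := by
  obtain ⟨S, hSf, hSg⟩ := hA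
  refine ⟨h '' S, hSf.image h, fun b => ?_⟩
  obtain ⟨a, rfl⟩ := hs b
  induction hSg a with
  | base a ha => exact InClosure.base _ (Set.mem_image_of_mem h ha)
  | app f x hx ih => rw [hh f x]; exact InClosure.app f _ ih

lemma finGen_fin {A : Alg σ} (hA : FinGen A) :
    ∃ (n : ℕ) (v : Fin (n + 1) → A.carrier), ∀ a, InClosure A (Set.range v) a := by
  classical
  obtain ⟨S, hSf, hSg⟩ := hA
  obtain ⟨a₀⟩ := A.nonempty
  have hS' : (insert a₀ S).Finite := hSf.insert a₀
  have hmem : ∀ x, x ∈ hS'.toFinset.toList ↔ x ∈ insert a₀ S := by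
    intro x; rw [Finset.mem_toList, Set.Finite.mem_toFinset]
  have hne : hS'.toFinset.toList ≠ [] := by
    intro h
    have h0 := (hmem a₀).2 (Set.mem_insert _ _)
    rw [h] at h0; simp at h0
  obtain ⟨n, hn⟩ : ∃ n, hS'.toFinset.toList.length = n + 1 :=
    ⟨_, (Nat.succ_pred_eq_of_pos (List.length_pos_iff.mpr hne)).symm⟩
  refine ⟨n, fun i => hS'.toFinset.toList.get (Fin.cast hn.symm i), fun a => ?_⟩
  have hsub : insert a₀ S ⊆
      Set.range fun i : Fin (n + 1) => hS'.toFinset.toList.get (Fin.cast hn.symm i) := by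
    intro x hx
    obtain ⟨j, hj⟩ := List.mem_iff_get.1 ((hmem x).2 hx)
    exact ⟨Fin.cast hn j, by simpa using hj⟩
  exact inClosure_mono (fun x hx => hsub (Set.subset_insert a₀ S hx)) (hSg a)

end CorrAux
namespace CorrAux

variable {σ : Signature}

lemma freeAlg_mem {V : Set (Alg σ)} (hV : IsVariety V) (k : ℕ) : freeAlg V k ∈ V := by
  classical
  have hw : ∀ p : {p : Trm σ (k + 1) × Trm σ (k + 1) // ¬ FreeCon V (k + 1) p.1 p.2},
      ∃ A, A ∈ V ∧ ∃ v : Fin (k + 1) → A.carrier,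
        Trm.eval A v p.1.1 ≠ Trm.eval A v p.1.2 := by
    intro p
    have hp := p.2
    unfold FreeCon at hp
    push_neg at hp
    obtain ⟨A, hA, v, hv⟩ := hp
    exact ⟨A, hA, v, hv⟩
  choose A hA v hv using hw
  apply hV.2.1
  refine ⟨PiAlg A, hV.1 _ A hA, fun q p => Trm.eval (A p) (v p) q.out, ?_, ?_⟩
  · intro f x
    funext p
    show Trm.eval (A p) (v p) ((freeAlg V k).op f x).out = _
    have hop : (freeAlg V k).op f x = Quot.mk _ (Trm.app f fun i => (x i).out) := rfl
    rw [hop, out_eval (hA p)]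
    rfl
  · intro q q' h
    by_contra hne
    have hnf : ¬ FreeCon V (k + 1) q.out q'.out := fun hc =>
      hne (by rw [← Quot.out_eq q, ← Quot.out_eq q']; exact Quot.sound hc)
    exact hv ⟨(q.out, q'.out), hnf⟩ (congrFun h ⟨(q.out, q'.out), hnf⟩)

noncomputable def evalMap (C : Set (Alg σ)) (k : ℕ) (A : Alg σ)
    (v : Fin (k + 1) → A.carrier) : (freeAlg C k).carrier → A.carrier :=
  fun q => Trm.eval A v q.out

lemma evalMap_mk {C : Set (Alg σ)} {k : ℕ} {A : Alg σ} (hA : A ∈ C)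
    (v : Fin (k + 1) → A.carrier) (s : Trm σ (k + 1)) :
    evalMap C k A v (Quot.mk _ s) = Trm.eval A v s :=
  out_eval hA s v

lemma evalMap_hom {C : Set (Alg σ)} {k : ℕ} {A : Alg σ} (hA : A ∈ C)
    (v : Fin (k + 1) → A.carrier) : IsHom (freeAlg C k) A (evalMap C k A v) := by
  intro f x
  rw [free_op f x (fun i => (x i).out) (fun i => (Quot.out_eq _).symm), evalMap_mk hA]
  rfl

lemma evalMap_surj {C : Set (Alg σ)} {k : ℕ} {A : Alg σ} (hA : A ∈ C)
    {v : Fin (k + 1) → A.carrier} (hgen : ∀ a, InClosure A (Set.range v) a) :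
    Function.Surjective (evalMap C k A v) := by
  intro a
  induction hgen a with
  | base a ha =>
      obtain ⟨j, rfl⟩ := ha
      exact ⟨Quot.mk _ (Trm.var j), evalMap_mk hA v _⟩
  | app f x hx ih =>
      choose q hq using ih
      refine ⟨(freeAlg C k).op f q, ?_⟩
      rw [evalMap_hom hA v f q]
      congr 1
      funext i
      exact hq i

lemma hom_eval {A B : Alg σ} {h : A.carrier → B.carrier} (hh : IsHom A B h) {n : ℕ}
    (v : Fin n → A.carrier) (u : Trm σ n) :
    h (Trm.eval A v u) = Trm.eval B (fun i => h (v i)) u := by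
  induction u with
  | var j => rfl
  | app f ts ih =>
      show h (A.op f _) = B.op f _
      rw [hh]
      congr 1
      funext i
      exact ih i

lemma eval_var {C : Set (Alg σ)} {k : ℕ} (s : Trm σ (k + 1)) :
    Trm.eval (freeAlg C k) (fun j => Quot.mk _ (Trm.var j)) s = Quot.mk _ s := by
  induction s with
  | var j => rfl
  | app f ts ih => exact free_op f _ ts ih

lemma quot_free_finGen {C : Set (Alg σ)} {k : ℕ} (θ : Cong (freeAlg C k)) :
    FinGen (quotAlg (freeAlg C k) θ.r) := by
  refine ⟨Set.range (fun j : Fin (k + 1) => Quot.mk θ.r (Quot.mk _ (Trm.var j))),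
    Set.finite_range _, fun a => ?_⟩
  have key : ∀ s : Trm σ (k + 1),
      InClosure (quotAlg (freeAlg C k) θ.r)
        (Set.range (fun j : Fin (k + 1) => Quot.mk θ.r (Quot.mk _ (Trm.var j))))
        (Quot.mk θ.r (Quot.mk (FreeCon C (k + 1)) s)) := by
    intro s
    induction s with
    | var j => exact InClosure.base _ ⟨j, rfl⟩
    | app f ts ih =>
        have h1 : (Quot.mk (FreeCon C (k + 1)) (Trm.app f ts) : (freeAlg C k).carrier) =
            (freeAlg C k).op f (fun i => Quot.mk _ (ts i)) :=
          (free_op f _ ts fun i => rfl).symm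
        have h2 : Quot.mk θ.r ((freeAlg C k).op f (fun i => Quot.mk _ (ts i))) =
            (quotAlg (freeAlg C k) θ.r).op f
              (fun i => Quot.mk θ.r (Quot.mk _ (ts i))) :=
          (quot_op θ f _ _ fun i => rfl).symm
        rw [h1, h2]
        exact InClosure.app f _ ih
  have ha : a = Quot.mk θ.r (Quot.mk _ a.out.out) := by
    have h1 := Quot.out_eq (a.out : Quot (FreeCon C (k + 1)))
    have h2 := Quot.out_eq (a : Quot θ.r)
    exact h2.symm.trans (congrArg (Quot.mk θ.r) h1.symm)
  rw [ha]
  exact key _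

lemma quot_mem {V : Set (Alg σ)} (hV : IsVariety V) {k : ℕ} (θ : Cong (freeAlg V k)) :
    quotAlg (freeAlg V k) θ.r ∈ V :=
  hV.2.2 ⟨freeAlg V k, freeAlg_mem hV k, Quot.mk θ.r, mk_hom θ, Quot.mk_surjective⟩

lemma conSubst_cong {V : Set (Alg σ)} (hV : IsVariety V) {k m : ℕ}
    (θ : Cong (freeAlg V k)) (t : Fin (m + 1) → (freeAlg V k).carrier) :
    IsCongruence (freeAlg V m) (conSubstRel θ t) := by
  constructor
  · exact ⟨fun _ => θ.iscon.1.refl _, fun h => θ.iscon.1.symm h,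
      fun h1 h2 => θ.iscon.1.trans h1 h2⟩
  · intro f x y hxy
    show θ.r (evalMap V m (freeAlg V k) t ((freeAlg V m).op f x))
      (evalMap V m (freeAlg V k) t ((freeAlg V m).op f y))
    rw [evalMap_hom (freeAlg_mem hV k) t f x, evalMap_hom (freeAlg_mem hV k) t f y]
    exact θ.iscon.2 f _ _ hxy

lemma cong_ext {A : Alg σ} {θ θ' : Cong A} (h : θ.r = θ'.r) : θ = θ' := by
  cases θ; cases θ'; cases h; rfl

lemma quot_ker_embed {A B : Alg σ} {h : A.carrier → B.carrier} (hh : IsHom A B h)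
    {r : A.carrier → A.carrier → Prop} (hr : ∀ a b, r a b ↔ h a = h b) :
    ∃ e : (quotAlg A r).carrier → B.carrier, IsHom (quotAlg A r) B e ∧
      Function.Injective e ∧ ∀ a, e (Quot.mk r a) = h a := by
  refine ⟨Quot.lift h (fun a b hab => (hr a b).1 hab), ?_, ?_, fun a => rfl⟩
  · intro f x
    show h (A.op f fun i => (x i).out) = _
    rw [hh]
    congr 1
    funext i
    conv_rhs => rw [← Quot.out_eq (x i)]
  · intro q q' hqq'
    rw [← Quot.out_eq q, ← Quot.out_eq q'] at hqq' ⊢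
    exact Quot.sound ((hr _ _).2 hqq')

lemma quot_ker_iso {A B : Alg σ} {h : A.carrier → B.carrier} (hh : IsHom A B h)
    (hs : Function.Surjective h) {r : A.carrier → A.carrier → Prop}
    (hr : ∀ a b, r a b ↔ h a = h b) : Isomorphic (quotAlg A r) B := by
  obtain ⟨e, he, hei, hemk⟩ := quot_ker_embed hh hr
  refine ⟨e, he, hei, fun b => ?_⟩
  obtain ⟨a, rfl⟩ := hs b
  exact ⟨Quot.mk r a, hemk a⟩

end CorrAux
namespace CorrAux

variable {σ : Signature}

/-- If the quotients by `θ` and `ψ` are connected by an injective hom, then `θ`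
is an inverse substitution of `ψ`. -/
lemma cong_eq_subst {V : Set (Alg σ)} {k m : ℕ}
    (θ : Cong (freeAlg V k)) (ψ : Cong (freeAlg V m))
    (G : (quotAlg (freeAlg V k) θ.r).carrier → (quotAlg (freeAlg V m) ψ.r).carrier)
    (Ghom : IsHom (quotAlg (freeAlg V k) θ.r) (quotAlg (freeAlg V m) ψ.r) G)
    (Ginj : Function.Injective G)
    (t : Fin (k + 1) → (freeAlg V m).carrier)
    (ht : ∀ j, Quot.mk ψ.r (t j) = G (Quot.mk θ.r (Quot.mk _ (Trm.var j)))) :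
    conSubstRel ψ t = θ.r := by
  have Hhom : IsHom (freeAlg V k) (quotAlg (freeAlg V m) ψ.r)
      (fun a => G (Quot.mk θ.r a)) := hom_comp (mk_hom θ) Ghom
  have key : ∀ a : (freeAlg V k).carrier,
      G (Quot.mk θ.r a) = Quot.mk ψ.r (Trm.eval (freeAlg V m) t a.out) := by
    intro a
    have e0 : Quot.mk θ.r a =
        Quot.mk θ.r (Trm.eval (freeAlg V k) (fun j => Quot.mk _ (Trm.var j)) a.out) := by
      rw [eval_var]
      exact congrArg (Quot.mk θ.r) (Quot.out_eq (a : Quot (FreeCon V (k + 1)))).symm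
    have e1 : G (Quot.mk θ.r (Trm.eval (freeAlg V k) (fun j => Quot.mk _ (Trm.var j)) a.out))
        = Trm.eval (quotAlg (freeAlg V m) ψ.r)
          (fun j => G (Quot.mk θ.r (Quot.mk _ (Trm.var j)))) a.out :=
      hom_eval Hhom _ a.out
    have e2 : Quot.mk ψ.r (Trm.eval (freeAlg V m) t a.out) =
        Trm.eval (quotAlg (freeAlg V m) ψ.r) (fun j => Quot.mk ψ.r (t j)) a.out :=
      hom_eval (mk_hom ψ) _ a.out
    rw [e0, e1, e2]
    congr 1
    funext j
    exact (ht j).symm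
  funext a b
  apply propext
  constructor
  · intro hab
    have hq : Quot.mk ψ.r (Trm.eval (freeAlg V m) t a.out) =
        Quot.mk ψ.r (Trm.eval (freeAlg V m) t b.out) := Quot.sound hab
    rw [← key a, ← key b] at hq
    exact rel_of_mk_eq θ.iscon.1 (Ginj hq)
  · intro hab
    have hq : G (Quot.mk θ.r a) = G (Quot.mk θ.r b) := congrArg G (Quot.sound hab)
    rw [key a, key b] at hq
    exact rel_of_mk_eq ψ.iscon.1 hq

/-- A finitely generated algebra embedding into a quotient of a free algebra by a
congruence in `B` is itself (isomorphic to) such a quotient, provided `B` is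
closed under inverse substitution. -/
lemma mem_KB_of_embed {V : Set (Alg σ)} (hV : IsVariety V)
    {B : ∀ k : ℕ, Set (Cong (freeAlg V k))} (hB : InvSubstClosed V B)
    {B₀ : Alg σ} (hfg : FinGen B₀) {m : ℕ} {ψ : Cong (freeAlg V m)} (hψ : ψ ∈ B m)
    {e' : B₀.carrier → (quotAlg (freeAlg V m) ψ.r).carrier}
    (e'hom : IsHom B₀ (quotAlg (freeAlg V m) ψ.r) e') (e'inj : Function.Injective e') :
    B₀ ∈ KB V B := by
  classical
  obtain ⟨n, b, hgen⟩ := finGen_fin hfg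
  obtain ⟨θ', hθ', hθ'r⟩ := hB m n ψ hψ (fun j => (e' (b j)).out)
  have hQV : quotAlg (freeAlg V m) ψ.r ∈ V := quot_mem hV ψ
  have hwt : ∀ j, Quot.mk ψ.r ((e' (b j)).out) = e' (b j) := fun j => Quot.out_eq _
  -- the evaluation hom from the free algebra to the quotient
  have φhom : IsHom (freeAlg V n) (quotAlg (freeAlg V m) ψ.r)
      (evalMap V n (quotAlg (freeAlg V m) ψ.r) (fun j => e' (b j))) :=
    evalMap_hom hQV _
  have φeq : ∀ s, evalMap V n (quotAlg (freeAlg V m) ψ.r) (fun j => e' (b j)) s =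
      Quot.mk ψ.r (Trm.eval (freeAlg V m) (fun j => (e' (b j)).out) s.out) := by
    intro s
    have e2 : Quot.mk ψ.r (Trm.eval (freeAlg V m) (fun j => (e' (b j)).out) s.out) =
        Trm.eval (quotAlg (freeAlg V m) ψ.r)
          (fun j => Quot.mk ψ.r ((e' (b j)).out)) s.out :=
      hom_eval (mk_hom ψ) _ s.out
    rw [e2]
    show Trm.eval _ (fun j => e' (b j)) s.out = _
    congr 1
    funext j
    exact (hwt j).symm
  have hker : ∀ a c, θ'.r a c ↔
      evalMap V n (quotAlg (freeAlg V m) ψ.r) (fun j => e' (b j)) a =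
      evalMap V n (quotAlg (freeAlg V m) ψ.r) (fun j => e' (b j)) c := by
    intro a c
    rw [hθ'r, φeq, φeq]
    exact (mk_eq_iff ψ.iscon.1).symm
  -- the range of the evaluation map coincides with the range of `e'`
  have hr1 : ∀ u : Trm σ (n + 1), ∃ b₀, e' b₀ =
      Trm.eval (quotAlg (freeAlg V m) ψ.r) (fun j => e' (b j)) u := by
    intro u
    induction u with
    | var j => exact ⟨b j, rfl⟩
    | app f ts ih =>
        choose b₀ hb₀ using ih
        refine ⟨B₀.op f b₀, ?_⟩
        rw [e'hom f b₀]
        show (quotAlg (freeAlg V m) ψ.r).op f (fun i => e' (b₀ i)) = _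
        congr 1
        funext i
        exact hb₀ i
  have hrange : ∀ s, ∃ b₀, e' b₀ =
      evalMap V n (quotAlg (freeAlg V m) ψ.r) (fun j => e' (b j)) s := fun s => hr1 s.out
  choose g0 hg0 using hrange
  have hr2 : ∀ b₀ : B₀.carrier, ∃ s, evalMap V n (quotAlg (freeAlg V m) ψ.r)
      (fun j => e' (b j)) s = e' b₀ := by
    intro b₀
    induction hgen b₀ with
    | base a ha =>
        obtain ⟨j, rfl⟩ := ha
        exact ⟨Quot.mk _ (Trm.var j), evalMap_mk hQV _ _⟩
    | app f x hx ih =>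
        choose s hs using ih
        refine ⟨(freeAlg V n).op f s, ?_⟩
        rw [φhom f s, e'hom f x]
        congr 1
        funext i
        exact hs i
  have hwd : ∀ a c, θ'.r a c → g0 a = g0 c := fun a c hac =>
    e'inj (by rw [hg0, hg0]; exact (hker a c).1 hac)
  refine ⟨quotAlg (freeAlg V n) θ'.r, ⟨n, θ', hθ', rfl⟩,
    Quot.lift g0 hwd, ?_, ?_, ?_⟩
  · intro f x
    apply e'inj
    show e' (g0 ((freeAlg V n).op f fun i => (x i).out)) = _
    rw [hg0, φhom, e'hom]
    congr 1
    funext i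
    conv_rhs => rw [← Quot.out_eq (x i)]
    exact (hg0 _).symm
  · intro q q' hqq'
    rw [← Quot.out_eq q, ← Quot.out_eq q'] at hqq' ⊢
    apply Quot.sound
    apply (hker _ _).2
    rw [← hg0, ← hg0]
    exact congrArg e' hqq'
  · intro b₀
    obtain ⟨s, hs⟩ := hr2 b₀
    refine ⟨Quot.mk θ'.r s, e'inj ?_⟩
    show e' (g0 s) = e' b₀
    rw [hg0, hs]

end CorrAux
open CorrAux

/-- Proposition 3 of the paper. The assignments `K ↦ B^K` and
`B ↦ K^B` establish a one-to-one correspondence between the subclasses of `V_fg`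
closed under finitely generated subalgebras and the subfamilies of `Con(F^V)`
closed under inverse substitution. -/
theorem correspondence_Sf {σ : Signature} (V : Set (Alg σ)) (hV : IsVariety V) :
    (∀ K : Set (Alg σ), K ⊆ Vfg V → Sf K = K →
      InvSubstClosed V (BK V K) ∧ KB V (BK V K) = K) ∧
    (∀ B : ∀ k : ℕ, Set (Cong (freeAlg V k)), InvSubstClosed V B →
      (KB V B ⊆ Vfg V ∧ Sf (KB V B) = KB V B) ∧ ∀ k : ℕ, BK V (KB V B) k = B k) := by
  constructor
  · -- Part 1
    intro K hKV hK
    have hIcl : Icl K ⊆ K := by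
      rintro x ⟨A, hA, hiso⟩
      have hfg : FinGen x := by
        obtain ⟨f, hf, hb⟩ := hiso
        exact finGen_of_surj (hKV hA).2 hf hb.2
      obtain ⟨g, ghom, gbij⟩ := iso_symm hiso
      have hx : x ∈ Sf K := ⟨hfg, A, hA, g, ghom, gbij.1⟩
      rwa [hK] at hx
    constructor
    · -- B^K is closed under inverse substitution
      intro k m θ hθ t
      obtain ⟨A, hAK, hiso⟩ := hθ
      refine ⟨⟨conSubstRel θ t, conSubst_cong hV θ t⟩, ?_, rfl⟩
      have φhom : IsHom (freeAlg V m) (quotAlg (freeAlg V k) θ.r)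
          (fun s => Quot.mk θ.r (evalMap V m (freeAlg V k) t s)) :=
        hom_comp (evalMap_hom (freeAlg_mem hV k) t) (mk_hom θ)
      have hker : ∀ a b, conSubstRel θ t a b ↔
          Quot.mk θ.r (evalMap V m (freeAlg V k) t a) =
          Quot.mk θ.r (evalMap V m (freeAlg V k) t b) :=
        fun a b => (mk_eq_iff θ.iscon.1).symm
      obtain ⟨e, ehom, einj, hemk⟩ := quot_ker_embed φhom hker
      obtain ⟨g, ghom, gbij⟩ := iso_symm hiso
      have hmem : quotAlg (freeAlg V m) (conSubstRel θ t) ∈ Sf K :=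
        ⟨quot_free_finGen ⟨conSubstRel θ t, conSubst_cong hV θ t⟩, A, hAK,
          fun q => g (e q), hom_comp ehom ghom, gbij.1.comp einj⟩
      rw [hK] at hmem
      exact ⟨_, hmem, iso_refl _⟩
    · -- K^{B^K} = K
      apply Set.Subset.antisymm
      · rintro x ⟨Q, ⟨k, θ, hθ, rfl⟩, hiso⟩
        obtain ⟨A, hAK, hiso2⟩ := hθ
        exact hIcl ⟨A, hAK, iso_trans hiso2 hiso⟩
      · intro A hA
        obtain ⟨hAV, hAfg⟩ := hKV hA
        obtain ⟨n, v, hgen⟩ := finGen_fin hAfg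
        have hhom := evalMap_hom (C := V) hAV v
        have hsurj := evalMap_surj hAV hgen
        have hiso : Isomorphic
            (quotAlg (freeAlg V n) (fun a b => evalMap V n A v a = evalMap V n A v b)) A :=
          quot_ker_iso hhom hsurj (fun _ _ => Iff.rfl)
        exact ⟨quotAlg (freeAlg V n) (fun a b => evalMap V n A v a = evalMap V n A v b),
          ⟨n, ⟨_, ker_cong hhom⟩, ⟨A, hA, iso_symm hiso⟩, rfl⟩, hiso⟩
  · -- Part 2
    intro B hB
    have hKBfg : KB V B ⊆ Vfg V := by
      rintro x ⟨Q, ⟨k, θ, hθ, rfl⟩, hiso⟩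
      obtain ⟨f, hf, hb⟩ := hiso
      exact ⟨hV.2.2 ⟨_, quot_mem hV θ, f, hf, hb.2⟩,
        finGen_of_surj (quot_free_finGen θ) hf hb.2⟩
    constructor
    · refine ⟨hKBfg, Set.Subset.antisymm ?_ ?_⟩
      · -- Sf (K^B) ⊆ K^B
        rintro B₀ ⟨hfg, A, hA, e, ehom, einj⟩
        obtain ⟨A₀, ⟨m, ψ, hψ, rfl⟩, hiso2⟩ := hA
        obtain ⟨g, ghom, gbij⟩ := iso_symm hiso2
        exact mem_KB_of_embed hV hB hfg hψ (hom_comp ehom ghom) (gbij.1.comp einj)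
      · intro x hx
        exact ⟨(hKBfg hx).2, x, hx, id, fun f y => rfl, fun a b h => h⟩
    · -- B^{K^B} = B
      intro k
      apply Set.Subset.antisymm
      · intro θ hθ
        obtain ⟨A, hA, hiso1⟩ := hθ
        obtain ⟨A₀, ⟨m, ψ, hψ, rfl⟩, hiso2⟩ := hA
        obtain ⟨G, Ghom, Gbij⟩ := iso_symm (iso_trans hiso2 hiso1)
        obtain ⟨θ', hθ', hθ'r⟩ := hB m k ψ hψ
          (fun j => (G (Quot.mk θ.r (Quot.mk _ (Trm.var j)))).out)
        have heq : conSubstRel ψ (fun j => (G (Quot.mk θ.r (Quot.mk _ (Trm.var j)))).out)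
            = θ.r :=
          cong_eq_subst θ ψ G Ghom Gbij.1 _ (fun j => Quot.out_eq _)
        have hθθ' : θ' = θ := cong_ext (hθ'r.trans heq)
        rw [← hθθ']
        exact hθ'
      · intro θ hθ
        exact ⟨quotAlg (freeAlg V k) θ.r,
          ⟨quotAlg (freeAlg V k) θ.r, ⟨k, θ, hθ, rfl⟩, iso_refl _⟩, iso_refl _⟩
end

section
/- Let V be a variety of τ-algebras and let B be a subfamily of Con(F^V) that is closed under inverse substitution. Then the class K^B is closed under finitely generated subalgebras: every isomorphic copy of a finitely generated subalgebra of a member of K^B belongs to K^B. -/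
variable {σ : Signature}

section AuxKBSf

theorem quot_mk_eq_iff {α : Type} {r : α → α → Prop} (hr : Equivalence r) {a b : α} :
    Quot.mk r a = Quot.mk r b ↔ r a b := by
  constructor
  · intro h
    have : Quot.lift (r a) (fun x y hxy =>
        propext ⟨fun h' => hr.trans h' hxy, fun h' => hr.trans h' (hr.symm hxy)⟩)
        (Quot.mk r b) := by
      rw [← h]; exact hr.refl a
    exact this
  · exact Quot.sound

theorem out_rel {α : Type} {r : α → α → Prop} (hr : Equivalence r) (a : α) :
    r (Quot.mk r a).out a :=
  (quot_mk_eq_iff hr).mp (Quot.out_eq _)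

theorem eval_hom {A B : Alg σ} {h : A.carrier → B.carrier} (hh : IsHom A B h)
    {n : ℕ} (s : Trm σ n) (v : Fin n → A.carrier) :
    h (s.eval A v) = s.eval B (fun i => h (v i)) := by
  induction s with
  | var i => rfl
  | app f ts ih =>
      show h (A.op f fun i => (ts i).eval A v) = B.op f fun i => (ts i).eval B _
      rw [hh]
      congr 1; funext i; exact ih i

theorem quot_mk_hom {A : Alg σ} {r : A.carrier → A.carrier → Prop}
    (hr : IsCongruence A r) : IsHom A (quotAlg A r) (Quot.mk r) := by
  intro f x
  show Quot.mk r (A.op f x) = Quot.mk r (A.op f fun i => (Quot.mk r (x i)).out)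
  exact Quot.sound (hr.2 f _ _ fun i => hr.1.symm (out_rel hr.1 (x i)))

theorem inv_hom {A B : Alg σ} {h : A.carrier → B.carrier} (hh : IsHom A B h)
    (hb : Function.Bijective h) :
    ∃ g : B.carrier → A.carrier, IsHom B A g ∧ Function.Injective g ∧
      Function.Surjective g := by
  let eqv := Equiv.ofBijective h hb
  have key : ∀ b, h (eqv.symm b) = b := fun b => eqv.apply_symm_apply b
  refine ⟨eqv.symm, ?_, eqv.symm.injective, eqv.symm.surjective⟩
  intro f x
  apply hb.1
  calc h (eqv.symm (B.op f x)) = B.op f x := key _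
    _ = B.op f (fun i => h (eqv.symm (x i))) := by congr 1; funext i; rw [key]
    _ = h (A.op f fun i => eqv.symm (x i)) := (hh f _).symm

/-- Substitution of terms into a term. -/
def Trm.subst {n m : ℕ} (u : Fin n → Trm σ m) : Trm σ n → Trm σ m
  | .var i => u i
  | .app f ts => .app f fun i => (ts i).subst u

theorem eval_subst {n m : ℕ} (A : Alg σ) (u : Fin n → Trm σ m) (w : Fin m → A.carrier)
    (s : Trm σ n) : (s.subst u).eval A w = s.eval A (fun i => (u i).eval A w) := by
  induction s with
  | var i => rfl
  | app f ts ih =>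
      show A.op f _ = A.op f _
      congr 1; funext i; exact ih i

theorem freeCon_equiv (C : Set (Alg σ)) (n : ℕ) : Equivalence (FreeCon C n) :=
  ⟨fun _ _ _ _ => rfl, fun h A hA v => (h A hA v).symm,
    fun h1 h2 A hA v => (h1 A hA v).trans (h2 A hA v)⟩

theorem freeAlg_eval (V : Set (Alg σ)) (k : ℕ) {n : ℕ} (s : Trm σ n)
    (v : Fin n → (freeAlg V k).carrier) :
    s.eval (freeAlg V k) v = Quot.mk (FreeCon V (k + 1)) (s.subst (fun i => (v i).out)) := by
  induction s with
  | var i => exact (Quot.out_eq _).symm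
  | app f ts ih =>
      show Quot.mk _ (Trm.app f fun i => ((ts i).eval (freeAlg V k) v).out) = _
      apply Quot.sound
      intro A hA w
      show A.op f _ = A.op f _
      congr 1; funext i
      have h1 : FreeCon V (k + 1) (((ts i).eval (freeAlg V k) v).out)
          ((ts i).subst fun j => (v j).out) :=
        (quot_mk_eq_iff (freeCon_equiv V (k + 1))).mp ((Quot.out_eq _).trans (ih i))
      exact h1 A hA w

theorem freeAlg_models (V : Set (Alg σ)) (k : ℕ) {n : ℕ} {s t : Trm σ n}
    (hst : FreeCon V n s t) (v : Fin n → (freeAlg V k).carrier) :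
    s.eval (freeAlg V k) v = t.eval (freeAlg V k) v := by
  rw [freeAlg_eval, freeAlg_eval]
  apply Quot.sound
  intro A hA w
  rw [eval_subst, eval_subst]
  exact hst A hA _

end AuxKBSf

/-- If `B` is a subfamily of `Con(F^V)` closed under inverse
substitution, then `K^B` is closed under finitely generated subalgebras: every
isomorphic copy of a finitely generated subalgebra of a member of `K^B` belongs
to `K^B`. -/
theorem KB_Sf_closed {σ : Signature} (V : Set (Alg σ)) (hV : IsVariety V)
    (B : ∀ k : ℕ, Set (Cong (freeAlg V k))) (hB : InvSubstClosed V B) :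
    Sf (KB V B) ⊆ KB V B := by
  rintro C ⟨hfg, D, hD, e, he, heinj⟩
  obtain ⟨A0, hA0, h, hh, hhb⟩ := hD
  obtain ⟨k, θ, hθ, rfl⟩ := hA0
  obtain ⟨g, hg, hginj, -⟩ := inv_hom hh hhb
  -- the embedding of C into the quotient of the free algebra
  have hι : IsHom C (quotAlg (freeAlg V k) θ.r) (fun c => g (e c)) := by
    intro f x
    exact (congrArg g (he f x)).trans (hg f _)
  have hιinj : Function.Injective (fun c : C.carrier => g (e c)) :=
    fun a b hab => heinj (hginj hab)
  -- generators
  classical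
  obtain ⟨S, hSfin, hSgen⟩ := hfg
  obtain ⟨c0⟩ := C.nonempty
  let l := hSfin.toFinset.toList
  set m := l.length with hm
  let gens : Fin (m + 1) → C.carrier :=
    fun i => if hi : (i : ℕ) < l.length then l.get ⟨i, hi⟩ else c0
  have hgen : ∀ a, InClosure C (Set.range gens) a := by
    intro a
    have mono : ∀ x, InClosure C S x → InClosure C (Set.range gens) x := by
      intro x hx
      induction hx with
      | base a ha =>
          have hal : a ∈ l := by
            simp only [l, Finset.mem_toList, Set.Finite.mem_toFinset]; exact ha
          obtain ⟨j, hj⟩ := List.mem_iff_get.mp hal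
          refine InClosure.base a ⟨⟨(j : ℕ), Nat.lt_succ_of_lt j.2⟩, ?_⟩
          simp only [gens]
          rw [dif_pos (show ((⟨(j : ℕ), Nat.lt_succ_of_lt j.2⟩ : Fin (m+1)) : ℕ) < l.length from j.2)]
          exact hj
      | app f x hx ih => exact InClosure.app f x ih
    exact mono a (hSgen a)
  have hterm : ∀ a : C.carrier, ∃ s : Trm σ (m + 1), a = s.eval C gens := by
    intro a
    induction hgen a with
    | base b hb => obtain ⟨i, hi⟩ := hb; exact ⟨.var i, hi.symm⟩
    | app f x hx ih =>
        choose ts hts using ih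
        refine ⟨.app f ts, ?_⟩
        show C.op f x = C.op f fun i => (ts i).eval C gens
        congr 1; funext i; exact hts i
  -- C satisfies the identities of V
  have hQmk : IsHom (freeAlg V k) (quotAlg (freeAlg V k) θ.r) (Quot.mk θ.r) :=
    quot_mk_hom θ.iscon
  have keyA0 : ∀ {n : ℕ} (s : Trm σ n) (w : Fin n → (quotAlg (freeAlg V k) θ.r).carrier),
      s.eval (quotAlg (freeAlg V k) θ.r) w
        = Quot.mk θ.r (s.eval (freeAlg V k) (fun i => (w i).out)) := by
    intro n s w
    have h2 := eval_hom hQmk s (fun i => (w i).out)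
    have hw : (fun i => Quot.mk θ.r ((w i).out)) = w := funext fun i => Quot.out_eq _
    rw [hw] at h2
    exact h2.symm
  have hCmodels : ∀ {n : ℕ} (s t : Trm σ n), FreeCon V n s t →
      ∀ v : Fin n → C.carrier, s.eval C v = t.eval C v := by
    intro n s t hst v
    apply hιinj
    have e1 := (eval_hom hι s v).trans (keyA0 s _)
    have e2 := (eval_hom hι t v).trans (keyA0 t _)
    exact e1.trans ((congrArg (Quot.mk θ.r) (freeAlg_models V k hst _)).trans e2.symm)
  have hout : ∀ (s : Trm σ (m + 1)) (v : Fin (m + 1) → C.carrier),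
      ((Quot.mk (FreeCon V (m + 1)) s).out).eval C v = s.eval C v := fun s v =>
    hCmodels _ _ ((quot_mk_eq_iff (freeCon_equiv V (m + 1))).mp (Quot.out_eq _)) v
  -- inverse substitution
  let tvec : Fin (m + 1) → (freeAlg V k).carrier := fun i => (g (e (gens i))).out
  obtain ⟨θ', hθ', hθ'r⟩ := hB k m θ hθ tvec
  let p : (freeAlg V m).carrier → C.carrier := fun q => q.out.eval C gens
  have hp : IsHom (freeAlg V m) C p := by
    intro f x
    show ((Quot.mk _ (Trm.app f fun i => (x i).out)).out).eval C gens = _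
    rw [hout]
    show C.op f _ = C.op f _
    rfl
  have hιp : ∀ q : (freeAlg V m).carrier,
      g (e (p q)) = Quot.mk θ.r (q.out.eval (freeAlg V k) tvec) := by
    intro q
    have h1 := eval_hom hι q.out gens
    have h2 := eval_hom hQmk q.out tvec
    have h3 : (fun i => Quot.mk θ.r (tvec i)) = (fun i => g (e (gens i))) :=
      funext fun i => Quot.out_eq _
    rw [h3] at h2
    exact h1.trans h2.symm
  have hker : ∀ a b, p a = p b ↔ θ'.r a b := by
    intro a b
    rw [hθ'r]
    constructor
    · intro hp'
      have h4 := congrArg (fun c => g (e c)) hp'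
      rw [hιp, hιp] at h4
      exact (quot_mk_eq_iff θ.iscon.1).mp h4
    · intro hr
      apply hιinj
      show g (e (p a)) = g (e (p b))
      rw [hιp, hιp]
      exact Quot.sound hr
  -- the isomorphism
  have hcongr : ∀ a, p (Quot.mk θ'.r a).out = p a := fun a =>
    (hker _ _).mpr ((quot_mk_eq_iff θ'.iscon.1).mp (Quot.out_eq _))
  refine ⟨quotAlg (freeAlg V m) θ'.r, ⟨m, θ', hθ', rfl⟩, fun q => p q.out, ?_, ?_, ?_⟩
  · -- hom
    intro f x
    show p ((Quot.mk θ'.r ((freeAlg V m).op f fun i => (x i).out)).out) = _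
    rw [hcongr]
    exact hp f _
  · -- injective
    intro a b hab
    rw [← Quot.out_eq a, ← Quot.out_eq b]
    exact Quot.sound ((hker _ _).mp hab)
  · -- surjective
    intro c
    obtain ⟨s, hs⟩ := hterm c
    refine ⟨Quot.mk θ'.r (Quot.mk (FreeCon V (m + 1)) s), ?_⟩
    show p (Quot.mk θ'.r (Quot.mk (FreeCon V (m + 1)) s)).out = c
    refine (hcongr (Quot.mk (FreeCon V (m + 1)) s : (freeAlg V m).carrier)).trans ?_
    show ((Quot.mk (FreeCon V (m + 1)) s).out).eval C gens = c
    rw [hout]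
    exact hs.symm
end

section
/- Let V be a variety of τ-algebras, let K ⊆ V_fg be closed under finitely generated subalgebras, and suppose the corresponding family B^K is closed under finite intersections. Then K is closed under finitely generated subalgebras of finite products: every algebra that embeds as a finitely generated subalgebra of a finite product A₁ × ⋯ × A_n of members of K belongs to K. -/
variable {σ : Signature}

/-! ### Auxiliary lemmas for Statement 10 -/

section Aux10

theorem quotLift_out' {α : Sort*} {r : α → α → Prop} {β : Sort*} (f : α → β)
    (pf : ∀ a b, r a b → f a = f b) (q : Quot r) :
    Quot.lift f pf q = f q.out :=
  congrArg (Quot.lift f pf) q.out_eq.symm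

theorem isHom_comp' {A B C : Alg σ} {h : A.carrier → B.carrier} {g : B.carrier → C.carrier}
    (hh : IsHom A B h) (hg : IsHom B C g) : IsHom A C (g ∘ h) := by
  intro f x
  show g (h _) = _
  rw [hh, hg]
  rfl

theorem isomorphic_symm' {A B : Alg σ} (h : Isomorphic A B) : Isomorphic B A := by
  obtain ⟨h, hhom, hinj, hsurj⟩ := h
  have : Nonempty A.carrier := A.nonempty
  refine ⟨Function.invFun h, ?_, ?_, ?_⟩
  · intro f x
    apply hinj
    rw [Function.invFun_eq (hsurj _), hhom]
    congr 1
    funext i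
    rw [Function.invFun_eq (hsurj _)]
  · intro a b hab
    have := congrArg h hab
    rwa [Function.invFun_eq (hsurj _), Function.invFun_eq (hsurj _)] at this
  · intro a
    exact ⟨h a, Function.leftInverse_invFun hinj a⟩

theorem isomorphic_trans' {A B C : Alg σ} (h1 : Isomorphic A B) (h2 : Isomorphic B C) :
    Isomorphic A C := by
  obtain ⟨f, hf, hfb⟩ := h1
  obtain ⟨g, hg, hgb⟩ := h2
  exact ⟨g ∘ f, isHom_comp' hf hg, hgb.comp hfb⟩

theorem inClosure_mono' {A : Alg σ} {S T : Set A.carrier} (hST : S ⊆ T) {a : A.carrier}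
    (h : InClosure A S a) : InClosure A T a := by
  induction h with
  | base a ha => exact .base a (hST ha)
  | app f x _ ih => exact .app f x ih

/-- Evaluation lift from the free algebra to any member of the class. -/
noncomputable def freeLift (V : Set (Alg σ)) (k : ℕ) (A : Alg σ) (hA : A ∈ V)
    (v : Fin (k + 1) → A.carrier) : (freeAlg V k).carrier → A.carrier :=
  Quot.lift (Trm.eval A v) (fun _ _ h => h A hA v)

theorem freeLift_out (V : Set (Alg σ)) (k : ℕ) (A : Alg σ) (hA : A ∈ V)
    (v : Fin (k + 1) → A.carrier) (q : (freeAlg V k).carrier) :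
    freeLift V k A hA v q = Trm.eval A v q.out :=
  quotLift_out' _ _ q

theorem freeLift_isHom (V : Set (Alg σ)) (k : ℕ) (A : Alg σ) (hA : A ∈ V)
    (v : Fin (k + 1) → A.carrier) : IsHom (freeAlg V k) A (freeLift V k A hA v) := by
  intro f x
  show Trm.eval A v (.app f fun i => (x i).out) = _
  show A.op f (fun i => Trm.eval A v ((x i).out)) = _
  congr 1
  funext i
  exact (freeLift_out V k A hA v (x i)).symm

theorem freeAlg_mk_app (V : Set (Alg σ)) (k : ℕ) (f : σ.F)
    (ts : Fin (σ.arity f) → Trm σ (k + 1)) :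
    Quot.mk (FreeCon V (k + 1)) (.app f ts) =
      (freeAlg V k).op f (fun i => Quot.mk (FreeCon V (k + 1)) (ts i)) := by
  apply Quot.sound
  intro A hA w
  show A.op f (fun i => Trm.eval A w (ts i)) = A.op f _
  congr 1
  funext i
  exact freeLift_out V k A hA w (Quot.mk _ (ts i))

theorem freeAlg_gen (V : Set (Alg σ)) (k : ℕ) (q : (freeAlg V k).carrier) :
    InClosure (freeAlg V k)
      (Set.range fun j : Fin (k + 1) => Quot.mk (FreeCon V (k + 1)) (.var j)) q := by
  induction q using Quot.ind with
  | mk t =>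
    induction t with
    | var j => exact .base _ ⟨j, rfl⟩
    | app f ts ih =>
      rw [freeAlg_mk_app]
      exact .app f _ fun i => ih i

theorem freeAlg_finGen (V : Set (Alg σ)) (k : ℕ) : FinGen (freeAlg V k) :=
  ⟨_, Set.finite_range _, freeAlg_gen V k⟩

theorem exists_term_of_inClosure {A : Alg σ} {k : ℕ} (v : Fin (k + 1) → A.carrier)
    (a : A.carrier) (ha : InClosure A (Set.range v) a) :
    ∃ t : Trm σ (k + 1), t.eval A v = a := by
  induction ha with
  | base a h =>
    obtain ⟨j, rfl⟩ := h
    exact ⟨.var j, rfl⟩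
  | app f x _ ih =>
    choose ts hts using ih
    refine ⟨.app f ts, ?_⟩
    show A.op f (fun i => Trm.eval A v (ts i)) = _
    congr 1
    funext i
    exact hts i

/-- The kernel congruence of a homomorphism. -/
def kerCong {A C : Alg σ} (h : A.carrier → C.carrier) (hh : IsHom A C h) : Cong A where
  r a b := h a = h b
  iscon := ⟨⟨fun _ => rfl, Eq.symm, Eq.trans⟩, fun f x y hxy => by
    show h (A.op f x) = h (A.op f y)
    rw [hh, hh]
    congr 1
    funext i
    exact hxy i⟩

theorem quot_ker_iso {A C : Alg σ} (h : A.carrier → C.carrier) (hh : IsHom A C h)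
    (hs : Function.Surjective h) :
    Isomorphic (quotAlg A (kerCong h hh).r) C := by
  refine ⟨Quot.lift h (fun _ _ hab => hab), ?_, ?_, ?_⟩
  · intro f x
    show h (A.op f fun i => (x i).out) = _
    rw [hh]
    congr 1
    funext i
    exact (quotLift_out' h (fun _ _ hab => hab) (x i)).symm
  · intro a b hab
    induction a using Quot.ind
    induction b using Quot.ind
    exact Quot.sound hab
  · intro c
    obtain ⟨a, rfl⟩ := hs c
    exact ⟨Quot.mk _ a, rfl⟩

/-- The image subalgebra of a homomorphism. -/
noncomputable def imAlg {A C : Alg σ} (h : A.carrier → C.carrier) (hh : IsHom A C h) : Alg σ :=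
  subAlg C (Set.range h) ⟨h (Classical.choice A.nonempty), Set.mem_range_self _⟩
    (fun f x hx => by
      choose a ha using hx
      refine ⟨A.op f a, ?_⟩
      rw [hh]
      congr 1
      funext i
      exact ha i)

theorem corestrict_isHom {A C : Alg σ} (h : A.carrier → C.carrier) (hh : IsHom A C h) :
    IsHom A (imAlg h hh) (fun a => ⟨h a, Set.mem_range_self a⟩) := by
  intro f x
  exact Subtype.ext (hh f x)

theorem corestrict_surjective {A C : Alg σ} (h : A.carrier → C.carrier) (hh : IsHom A C h) :
    Function.Surjective (fun a => (⟨h a, Set.mem_range_self a⟩ : (imAlg h hh).carrier)) := by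
  rintro ⟨c, a, rfl⟩
  exact ⟨a, rfl⟩

theorem imAlg_val_isHom {A C : Alg σ} (h : A.carrier → C.carrier) (hh : IsHom A C h) :
    IsHom (imAlg h hh) C Subtype.val := by
  intro f x
  rfl

theorem finGen_of_surjective {A C : Alg σ} {h : A.carrier → C.carrier} (hh : IsHom A C h)
    (hs : Function.Surjective h) (hfg : FinGen A) : FinGen C := by
  obtain ⟨S, hSfin, hSgen⟩ := hfg
  refine ⟨h '' S, hSfin.image h, fun c => ?_⟩
  obtain ⟨a, rfl⟩ := hs c
  have key : ∀ a, InClosure A S a → InClosure C (h '' S) (h a) := by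
    intro a ha
    induction ha with
    | base a haS => exact .base _ ⟨a, haS, rfl⟩
    | app f x _ ih =>
      rw [hh]
      exact .app f _ ih
  exact key a (hSgen a)

end Aux10

/-- If `K ⊆ V_fg` is closed under finitely generated subalgebras
and `B^K` is closed under finite intersections, then `K` is closed under finitely
generated subalgebras of finite products: every algebra embedding as a finitely
generated subalgebra into a finite product `A₁ × ⋯ × A_n` of members of `K`
belongs to `K`. -/
theorem SPf_of_interClosed {σ : Signature} (V : Set (Alg σ)) (hV : IsVariety V)
    (K : Set (Alg σ)) (hK : K ⊆ Vfg V) (hSf : Sf K = K)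
    (hInter : InterClosed V (BK V K)) :
    ∀ B : Alg σ, FinGen B → ∀ (n : ℕ) (A : Fin (n + 1) → Alg σ), (∀ i, A i ∈ K) →
      ∀ e : B.carrier → (PiAlg A).carrier, IsHom B (PiAlg A) e →
        Function.Injective e → B ∈ K := by
  intro B hBfg n A hA e ehom einj
  have hPiV : PiAlg A ∈ V := hV.1 (Fin (n + 1)) A fun i => (hK (hA i)).1
  have hBV : B ∈ V := hV.2.1 ⟨PiAlg A, hPiV, e, ehom, einj⟩
  -- choose a generating tuple of B
  obtain ⟨S, hSfin, hSgen⟩ := hBfg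
  have hBfg' : FinGen B := ⟨S, hSfin, hSgen⟩
  obtain ⟨m, emb, hemb⟩ := (hSfin.insert (Classical.choice B.nonempty)).fin_embedding
  have hm : m ≠ 0 := by
    rintro rfl
    have : Classical.choice B.nonempty ∈ Set.range emb := hemb ▸ Set.mem_insert _ _
    obtain ⟨j, -⟩ := this
    exact j.elim0
  obtain ⟨k, rfl⟩ := Nat.exists_eq_succ_of_ne_zero hm
  set v : Fin (k + 1) → B.carrier := fun j => emb j with hv
  have hgen : ∀ b, InClosure B (Set.range v) b := by
    intro b
    refine inClosure_mono' ?_ (hSgen b)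
    intro a haS
    have : a ∈ Set.range emb := hemb ▸ Set.mem_insert_of_mem _ haS
    obtain ⟨j, hj⟩ := this
    exact ⟨j, hj⟩
  -- the canonical surjection from the free algebra onto B
  set π := freeLift V k B hBV v with hπ
  have hπhom : IsHom (freeAlg V k) B π := freeLift_isHom V k B hBV v
  have hπsurj : Function.Surjective π := by
    intro b
    obtain ⟨t, ht⟩ := exists_term_of_inClosure v b (hgen b)
    exact ⟨Quot.mk _ t, ht⟩
  -- projections to the factors
  have projhom : ∀ i : Fin (n + 1), IsHom (PiAlg A) (A i) (fun p => p i) :=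
    fun _ _ _ => rfl
  have hρhom : ∀ i, IsHom (freeAlg V k) (A i) ((fun p => p i) ∘ e ∘ π) :=
    fun i => isHom_comp' (isHom_comp' hπhom ehom) (projhom i)
  set θs : Fin (n + 1) → Cong (freeAlg V k) :=
    fun i => kerCong _ (corestrict_isHom _ (hρhom i)) with hθs
  have hθsB : ∀ i, θs i ∈ BK V K k := by
    intro i
    refine ⟨imAlg _ (hρhom i), ?_,
      isomorphic_symm' (quot_ker_iso _ _ (corestrict_surjective _ (hρhom i)))⟩
    rw [← hSf]
    exact ⟨finGen_of_surjective (corestrict_isHom _ (hρhom i))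
        (corestrict_surjective _ (hρhom i)) (freeAlg_finGen V k),
      A i, hA i, Subtype.val, imAlg_val_isHom _ (hρhom i), Subtype.val_injective⟩
  obtain ⟨θ', hθ'B, hθ'r⟩ := hInter k n θs hθsB
  have hrel : θ'.r = (kerCong π hπhom).r := by
    rw [hθ'r]
    funext a b
    apply propext
    constructor
    · intro h
      apply einj
      funext i
      exact congrArg Subtype.val (h i)
    · intro h i
      exact Subtype.ext (congrArg (fun q => (e q) i) h)
  have hquot : quotAlg (freeAlg V k) (kerCong π hπhom).r ∈ Icl K := by
    rw [← hrel]
    exact hθ'B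
  obtain ⟨A0, hA0K, hiso⟩ := hquot
  have hAB : Isomorphic A0 B := isomorphic_trans' hiso (quot_ker_iso π hπhom hπsurj)
  obtain ⟨g, ghom, gbij⟩ := isomorphic_symm' hAB
  rw [← hSf]
  exact ⟨hBfg', A0, hA0K, g, ghom, gbij.1⟩
end
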